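/- arXiv:1205.4518 — 4 statements merged into one kernel-verified Lean document; each statement's English description precedes it below -/
import Mathlib

section
/- For probability measures f and g on E ⊆ ℝ^d with finite k-th moments, and for any k > 2, the quadratic Wasserstein distance W₂ (built from the Euclidean cost) satisfies W₂(f,g) ≤ 2^{3/2} · (M_k(f)+M_k(g))^{1/k} · W₁(f,g)^{1/2 - 1/k}, where W₁ is the Monge-Kantorovich distance built from the truncated distance d_E(x,y) = min(|x-y|,1). -/
open MeasureTheory ENNReal

noncomputable section

/-- Monge–Kantorovich transport "distance" with general cost `c`:
infimum over couplings of `μ` and `ν` of the integral of the cost. -/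
def Winf {α : Type*} [MeasurableSpace α] (c : α → α → ℝ≥0∞) (μ ν : Measure α) : ℝ≥0∞ :=
  ⨅ (π : Measure (α × α)) (_ : π.map Prod.fst = μ) (_ : π.map Prod.snd = ν),
    ∫⁻ p, c p.1 p.2 ∂π

/-- Truncated distance `d_E(x,y) = min(|x-y|, 1)`. -/
def dE {α : Type*} [PseudoEMetricSpace α] (x y : α) : ℝ≥0∞ := min (edist x y) 1

/-- Moment of order `k`: `M_k(f) = ∫ ⟨v⟩^k df`, `⟨v⟩ = (1+|v|²)^{1/2}`. -/
def Mk {d : ℕ} (k : ℝ) (f : Measure (EuclideanSpace ℝ (Fin d))) : ℝ≥0∞ :=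
  ∫⁻ v, ENNReal.ofReal ((1 + ‖v‖ ^ 2) ^ (k / 2)) ∂f

namespace W2aux

variable {α : Type*}

/-! ### Generic facts about `Winf` -/

lemma winf_le [MeasurableSpace α] (c : α → α → ℝ≥0∞) {μ ν : Measure α}
    {π : Measure (α × α)} (h1 : π.map Prod.fst = μ) (h2 : π.map Prod.snd = ν) :
    Winf c μ ν ≤ ∫⁻ p, c p.1 p.2 ∂π :=
  iInf_le_of_le π (iInf_le_of_le h1 (iInf_le _ h2))

lemma isProb_of_coupling [MeasurableSpace α] {μ : Measure α} [IsProbabilityMeasure μ]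
    {π : Measure (α × α)} (h1 : π.map Prod.fst = μ) : IsProbabilityMeasure π := by
  constructor
  have h := congrArg (fun m : Measure α => m Set.univ) h1
  simp only [Measure.map_apply measurable_fst MeasurableSet.univ, Set.preimage_univ] at h
  rw [h]; exact measure_univ

lemma measurable_dE_pair [MeasurableSpace α] [PseudoEMetricSpace α] [OpensMeasurableSpace α]
    [SecondCountableTopology α] :
    Measurable (fun p : α × α => dE p.1 p.2) :=
  (continuous_edist.min continuous_const).measurable

lemma winf_dE_le_one [MeasurableSpace α] [PseudoEMetricSpace α] (μ ν : Measure α)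
    [IsProbabilityMeasure μ] [IsProbabilityMeasure ν] : Winf dE μ ν ≤ 1 := by
  have h1 : (μ.prod ν).map Prod.fst = μ := Measure.fst_prod
  have h2 : (μ.prod ν).map Prod.snd = ν := Measure.snd_prod
  refine le_trans (winf_le dE h1 h2) ?_
  calc ∫⁻ p, dE p.1 p.2 ∂(μ.prod ν) ≤ ∫⁻ _, 1 ∂(μ.prod ν) :=
        lintegral_mono fun p => min_le_right _ _
    _ = 1 := by simp

lemma exists_coupling_lt [MeasurableSpace α] {μ ν : Measure α} {c : α → α → ℝ≥0∞}
    {ε : ℝ≥0∞} (h : Winf c μ ν < ε) :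
    ∃ π : Measure (α × α), π.map Prod.fst = μ ∧ π.map Prod.snd = ν ∧
      ∫⁻ p, c p.1 p.2 ∂π < ε := by
  rw [Winf, iInf_lt_iff] at h
  obtain ⟨π, hπ⟩ := h
  rw [iInf_lt_iff] at hπ
  obtain ⟨h1, hπ⟩ := hπ
  rw [iInf_lt_iff] at hπ
  obtain ⟨h2, hπ⟩ := hπ
  exact ⟨π, h1, h2, hπ⟩

lemma winf_dE_symm_le [MeasurableSpace α] [PseudoEMetricSpace α] [OpensMeasurableSpace α]
    [SecondCountableTopology α] (μ ν : Measure α) :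
    Winf dE ν μ ≤ Winf dE μ ν := by
  refine le_iInf fun π => le_iInf fun h1 => le_iInf fun h2 => ?_
  have hm1 : (π.map Prod.swap).map Prod.fst = ν := by
    rw [Measure.map_map measurable_fst measurable_swap]
    exact h2
  have hm2 : (π.map Prod.swap).map Prod.snd = μ := by
    rw [Measure.map_map measurable_snd measurable_swap]
    exact h1
  refine le_trans (winf_le dE hm1 hm2) ?_
  rw [lintegral_map measurable_dE_pair measurable_swap]
  refine le_of_eq (lintegral_congr fun p => ?_)
  simp [dE, edist_comm]

lemma winf_self_zero [MeasurableSpace α] [PseudoEMetricSpace α] [OpensMeasurableSpace α]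
    [SecondCountableTopology α] (μ : Measure α) [SFinite μ] :
    Winf (fun x y : α => edist x y ^ 2) μ μ = 0 := by
  have hdiag : Measurable fun x : α => (x, x) := measurable_id.prodMk measurable_id
  have h1 : (μ.map fun x => (x, x)).map Prod.fst = μ := by
    rw [Measure.map_map measurable_fst hdiag]
    exact Measure.map_id'
  have h2 : (μ.map fun x => (x, x)).map Prod.snd = μ := by
    rw [Measure.map_map measurable_snd hdiag]
    exact Measure.map_id'
  refine le_antisymm (le_trans (winf_le _ h1 h2) ?_) zero_le
  rw [lintegral_map (continuous_edist.measurable.pow_const 2) hdiag]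
  simp [edist_self]

/-! ### Moments -/

lemma measurable_mom {d : ℕ} (k : ℝ) : Measurable fun v : EuclideanSpace ℝ (Fin d) =>
    ENNReal.ofReal ((1 + ‖v‖ ^ 2) ^ (k / 2)) := by
  apply (ENNReal.continuous_ofReal.comp ?_).measurable
  apply Continuous.rpow_const
  · exact continuous_const.add (continuous_norm.pow 2)
  · intro x; left; positivity

lemma one_le_Mk {d : ℕ} {k : ℝ} (hk : 0 ≤ k) (f : Measure (EuclideanSpace ℝ (Fin d)))
    [IsProbabilityMeasure f] : 1 ≤ Mk k f := by
  have h : ∀ v : EuclideanSpace ℝ (Fin d),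
      (1 : ℝ≥0∞) ≤ ENNReal.ofReal ((1 + ‖v‖ ^ 2) ^ (k / 2)) := by
    intro v
    rw [show (1:ℝ≥0∞) = ENNReal.ofReal 1 by simp]
    exact ENNReal.ofReal_le_ofReal
      (Real.one_le_rpow (by nlinarith [sq_nonneg ‖v‖]) (by positivity))
  calc (1:ℝ≥0∞) = ∫⁻ _, 1 ∂f := by simp
    _ ≤ Mk k f := lintegral_mono h

lemma norm_le_aux {E : Type*} [NormedAddCommGroup E] (x : E) :
    ‖x‖ ≤ (1 + ‖x‖ ^ 2) ^ ((1:ℝ) / 2) := by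
  rw [← Real.sqrt_eq_rpow]
  calc ‖x‖ = Real.sqrt (‖x‖ ^ 2) := (Real.sqrt_sq (norm_nonneg x)).symm
    _ ≤ Real.sqrt (1 + ‖x‖ ^ 2) := Real.sqrt_le_sqrt (by nlinarith)

lemma real_mom_bound {E : Type*} [NormedAddCommGroup E] {k : ℝ} (hk : 0 ≤ k) (x y : E) :
    dist x y ^ k ≤ 2 ^ k * ((1 + ‖x‖ ^ 2) ^ (k / 2) + (1 + ‖y‖ ^ 2) ^ (k / 2)) := by
  have hx : ‖x‖ ≤ (1 + ‖x‖ ^ 2) ^ ((1:ℝ) / 2) := norm_le_aux x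
  have hy : ‖y‖ ≤ (1 + ‖y‖ ^ 2) ^ ((1:ℝ) / 2) := norm_le_aux y
  set a := (1 + ‖x‖ ^ 2) ^ ((1:ℝ) / 2) with ha
  set b := (1 + ‖y‖ ^ 2) ^ ((1:ℝ) / 2) with hb
  have ha0 : (0:ℝ) ≤ a := Real.rpow_nonneg (by positivity) _
  have hb0 : (0:ℝ) ≤ b := Real.rpow_nonneg (by positivity) _
  have hak : a ^ k = (1 + ‖x‖ ^ 2) ^ (k / 2) := by
    rw [ha, ← Real.rpow_mul (by positivity), one_div, inv_mul_eq_div]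
  have hbk : b ^ k = (1 + ‖y‖ ^ 2) ^ (k / 2) := by
    rw [hb, ← Real.rpow_mul (by positivity), one_div, inv_mul_eq_div]
  have hmax0 : (0:ℝ) ≤ max a b := le_max_of_le_left ha0
  have hd : dist x y ≤ 2 * max a b := by
    rw [dist_eq_norm]
    calc ‖x - y‖ ≤ ‖x‖ + ‖y‖ := norm_sub_le x y
      _ ≤ a + b := add_le_add hx hy
      _ ≤ max a b + max a b := add_le_add (le_max_left a b) (le_max_right a b)
      _ = 2 * max a b := by ring
  calc dist x y ^ k ≤ (2 * max a b) ^ k := Real.rpow_le_rpow dist_nonneg hd hk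
    _ = 2 ^ k * (max a b) ^ k := Real.mul_rpow (by norm_num) hmax0
    _ ≤ 2 ^ k * (a ^ k + b ^ k) := by
        apply mul_le_mul_of_nonneg_left ?_ (Real.rpow_nonneg (by norm_num) k)
        rcases max_cases a b with ⟨h, _⟩ | ⟨h, _⟩ <;> rw [h]
        · exact le_add_of_nonneg_right (Real.rpow_nonneg hb0 k)
        · exact le_add_of_nonneg_left (Real.rpow_nonneg ha0 k)
    _ = 2 ^ k * ((1 + ‖x‖ ^ 2) ^ (k / 2) + (1 + ‖y‖ ^ 2) ^ (k / 2)) := by rw [hak, hbk]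

lemma edist_rpow_le_mom {E : Type*} [NormedAddCommGroup E] {k : ℝ} (hk : 0 ≤ k) (x y : E) :
    edist x y ^ k ≤ 2 ^ k * (ENNReal.ofReal ((1 + ‖x‖ ^ 2) ^ (k / 2)) +
      ENNReal.ofReal ((1 + ‖y‖ ^ 2) ^ (k / 2))) := by
  rw [edist_dist, ENNReal.ofReal_rpow_of_nonneg dist_nonneg hk]
  calc ENNReal.ofReal (dist x y ^ k)
      ≤ ENNReal.ofReal (2 ^ k * ((1 + ‖x‖ ^ 2) ^ (k / 2) + (1 + ‖y‖ ^ 2) ^ (k / 2))) :=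
        ENNReal.ofReal_le_ofReal (real_mom_bound hk x y)
    _ = 2 ^ k * (ENNReal.ofReal ((1 + ‖x‖ ^ 2) ^ (k / 2)) +
        ENNReal.ofReal ((1 + ‖y‖ ^ 2) ^ (k / 2))) := by
        rw [ENNReal.ofReal_mul (by positivity),
          ENNReal.ofReal_add (by positivity) (by positivity),
          ← ENNReal.ofReal_rpow_of_nonneg (by norm_num) hk]
        norm_num

/-! ### The key pointwise estimate -/

lemma key_pointwise {E : Type*} [NormedAddCommGroup E] {k : ℝ} (hk : 2 < k)
    {R : ℝ≥0∞} (hR1 : 1 ≤ R) (hRt : R ≠ ∞) (x y : E) :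
    edist x y ^ (2:ℝ) ≤ R ^ (2:ℝ) * dE x y +
      R ^ ((2:ℝ) - k) * (2 ^ k * (ENNReal.ofReal ((1 + ‖x‖ ^ 2) ^ (k / 2)) +
        ENNReal.ofReal ((1 + ‖y‖ ^ 2) ^ (k / 2)))) := by
  set e := edist x y with hedef
  have he : e ≠ ∞ := edist_ne_top x y
  have hR0 : R ≠ 0 := by
    intro h; rw [h] at hR1; simp at hR1
  rcases le_or_gt e R with h | h
  · apply le_add_right
    rcases le_or_gt e 1 with h1 | h1
    · have hmin : dE x y = e := min_eq_left h1
      rw [hmin]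
      have hsq : e ^ (2:ℝ) = e * e := by
        rw [show (2:ℝ) = ((2:ℕ):ℝ) by norm_num, ENNReal.rpow_natCast, sq]
      rw [hsq]
      have h1R : (1:ℝ≥0∞) ≤ R ^ (2:ℝ) := ENNReal.one_le_rpow hR1 (by norm_num)
      calc e * e ≤ 1 * e := mul_le_mul_left h1 e
        _ ≤ R ^ (2:ℝ) * e := mul_le_mul_left h1R e
    · have hmin : dE x y = 1 := min_eq_right h1.le
      rw [hmin, mul_one]
      exact ENNReal.rpow_le_rpow h (by norm_num)
  · apply le_add_left
    have he0 : e ≠ 0 := by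
      intro h0; rw [h0] at h
      exact (not_lt_of_ge (zero_le : (0:ℝ≥0∞) ≤ R)) h
    have step1 : e ^ (2:ℝ) ≤ R ^ ((2:ℝ) - k) * e ^ k := by
      have hsplit : e ^ k = e ^ (k - 2) * e ^ (2:ℝ) := by
        rw [← ENNReal.rpow_add _ _ he0 he]; norm_num
      have hRsplit : (R ^ ((2:ℝ) - k)) * R ^ (k - 2) = 1 := by
        rw [← ENNReal.rpow_add _ _ hR0 hRt]; norm_num
      calc e ^ (2:ℝ) = (R ^ ((2:ℝ) - k) * R ^ (k - 2)) * e ^ (2:ℝ) := by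
            rw [hRsplit, one_mul]
        _ ≤ R ^ ((2:ℝ) - k) * (e ^ (k - 2) * e ^ (2:ℝ)) := by
            rw [mul_assoc]
            exact mul_le_mul_right
              (mul_le_mul_left (ENNReal.rpow_le_rpow h.le (by linarith)) _) _
        _ = R ^ ((2:ℝ) - k) * e ^ k := by rw [← hsplit]
    exact step1.trans (mul_le_mul_right (edist_rpow_le_mom (by linarith) x y) _)

/-! ### Integrated estimate along a coupling -/

lemma lintegral_cost_le {d : ℕ} {k : ℝ} (hk : 2 < k) {R : ℝ≥0∞} (hR1 : 1 ≤ R) (hRt : R ≠ ∞)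
    {f g : Measure (EuclideanSpace ℝ (Fin d))}
    {π : Measure (EuclideanSpace ℝ (Fin d) × EuclideanSpace ℝ (Fin d))}
    (h1 : π.map Prod.fst = f) (h2 : π.map Prod.snd = g) :
    ∫⁻ p, edist p.1 p.2 ^ (2:ℝ) ∂π ≤
      R ^ (2:ℝ) * ∫⁻ p, dE p.1 p.2 ∂π +
        R ^ ((2:ℝ) - k) * (2 ^ k * (Mk k f + Mk k g)) := by
  have hk0 : (0:ℝ) ≤ k := by linarith
  have hR2t : R ^ (2:ℝ) ≠ ∞ := ENNReal.rpow_ne_top_of_nonneg (by norm_num) hRt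
  have hR2kt : R ^ ((2:ℝ) - k) ≠ ∞ :=
    ne_top_of_le_ne_top one_ne_top (ENNReal.rpow_le_one_of_one_le_of_neg hR1 (by linarith))
  have h2kt : (2:ℝ≥0∞) ^ k ≠ ∞ :=
    ENNReal.rpow_ne_top_of_nonneg hk0 (by simp)
  have hmeas1 : Measurable fun p : EuclideanSpace ℝ (Fin d) × EuclideanSpace ℝ (Fin d) =>
      R ^ (2:ℝ) * dE p.1 p.2 := measurable_dE_pair.const_mul _
  have hmom : ∫⁻ p, (ENNReal.ofReal ((1 + ‖p.1‖ ^ 2) ^ (k / 2)) +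
      ENNReal.ofReal ((1 + ‖p.2‖ ^ 2) ^ (k / 2))) ∂π = Mk k f + Mk k g := by
    have hmf : Measurable fun p : EuclideanSpace ℝ (Fin d) × EuclideanSpace ℝ (Fin d) =>
        ENNReal.ofReal ((1 + ‖p.1‖ ^ 2) ^ (k / 2)) := (measurable_mom k).comp measurable_fst
    rw [lintegral_add_left hmf, Mk, Mk, ← h1, ← h2,
      lintegral_map (measurable_mom k) measurable_fst,
      lintegral_map (measurable_mom k) measurable_snd]
  calc ∫⁻ p, edist p.1 p.2 ^ (2:ℝ) ∂π
      ≤ ∫⁻ p, (R ^ (2:ℝ) * dE p.1 p.2 +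
          R ^ ((2:ℝ) - k) * (2 ^ k * (ENNReal.ofReal ((1 + ‖p.1‖ ^ 2) ^ (k / 2)) +
            ENNReal.ofReal ((1 + ‖p.2‖ ^ 2) ^ (k / 2))))) ∂π :=
        lintegral_mono fun p => key_pointwise hk hR1 hRt p.1 p.2
    _ = R ^ (2:ℝ) * ∫⁻ p, dE p.1 p.2 ∂π +
        R ^ ((2:ℝ) - k) * (2 ^ k * (Mk k f + Mk k g)) := by
        rw [lintegral_add_left hmeas1, lintegral_const_mul' _ _ hR2t,
          lintegral_const_mul' _ _ hR2kt, lintegral_const_mul' _ _ h2kt, hmom]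

/-! ### The per-coupling bound -/

lemma couple_bound {d : ℕ} {k : ℝ} (hk : 2 < k)
    {f g : Measure (EuclideanSpace ℝ (Fin d))}
    [IsProbabilityMeasure f] [IsProbabilityMeasure g]
    (hM : Mk k f + Mk k g ≠ ∞)
    {π : Measure (EuclideanSpace ℝ (Fin d) × EuclideanSpace ℝ (Fin d))}
    (h1 : π.map Prod.fst = f) (h2 : π.map Prod.snd = g) :
    Winf (fun x y : EuclideanSpace ℝ (Fin d) => edist x y ^ 2) f g ≤
      2 ^ (3:ℝ) * (Mk k f + Mk k g) ^ (2 / k) * (∫⁻ p, dE p.1 p.2 ∂π) ^ (1 - 2 / k) := by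
  have hk0 : (0:ℝ) < k := by linarith
  set M := Mk k f + Mk k g with hMdef
  set w := ∫⁻ p, dE p.1 p.2 ∂π with hwdef
  haveI := isProb_of_coupling (μ := f) h1
  have hM1 : 1 ≤ M := le_trans (one_le_Mk (by linarith) f) le_self_add
  have hM0 : M ≠ 0 := by
    intro h; rw [h] at hM1; simp at hM1
  have hw1 : w ≤ 1 := by
    rw [hwdef]
    calc ∫⁻ p, dE p.1 p.2 ∂π ≤ ∫⁻ _, 1 ∂π := lintegral_mono fun p => min_le_right _ _
      _ = 1 := by simp
  have hwt : w ≠ ∞ := ne_top_of_le_ne_top one_ne_top hw1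
  have hWle : ∀ R : ℝ≥0∞, 1 ≤ R → R ≠ ∞ →
      Winf (fun x y : EuclideanSpace ℝ (Fin d) => edist x y ^ 2) f g ≤
        R ^ (2:ℝ) * w + R ^ ((2:ℝ) - k) * (2 ^ k * M) := by
    intro R hR1 hRt
    refine le_trans (winf_le _ h1 h2) ?_
    have hconv : ∫⁻ p, edist p.1 p.2 ^ 2 ∂π = ∫⁻ p, edist p.1 p.2 ^ (2:ℝ) ∂π := by
      refine lintegral_congr fun p => ?_
      rw [show ((2:ℝ)) = ((2:ℕ):ℝ) by norm_num, ENNReal.rpow_natCast]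
    rw [hconv]
    exact lintegral_cost_le hk hR1 hRt h1 h2
  by_cases hw0 : w = 0
  · have hmeas2 : Measurable fun p : EuclideanSpace ℝ (Fin d) × EuclideanSpace ℝ (Fin d) =>
        edist p.1 p.2 ^ 2 := continuous_edist.measurable.pow_const 2
    have hae : (fun p : EuclideanSpace ℝ (Fin d) × EuclideanSpace ℝ (Fin d) =>
        dE p.1 p.2) =ᵐ[π] 0 := by
      rw [← lintegral_eq_zero_iff measurable_dE_pair]
      rw [← hwdef]; exact hw0
    have hzero : ∫⁻ p, edist p.1 p.2 ^ 2 ∂π = 0 := by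
      rw [lintegral_eq_zero_iff hmeas2]
      filter_upwards [hae] with p hp
      have hp' : min (edist p.1 p.2) 1 = 0 := hp
      have : edist p.1 p.2 = 0 := by
        rcases min_cases (edist p.1 p.2) 1 with ⟨hm, _⟩ | ⟨hm, _⟩
        · rw [hm] at hp'; exact hp'
        · rw [hm] at hp'; exact absurd hp' one_ne_zero
      simp [this]
    calc Winf (fun x y : EuclideanSpace ℝ (Fin d) => edist x y ^ 2) f g
        ≤ ∫⁻ p, edist p.1 p.2 ^ 2 ∂π := winf_le _ h1 h2
      _ = 0 := hzero
      _ ≤ _ := zero_le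
  · -- main case : `w > 0`
    have h2k0 : (2:ℝ≥0∞) ^ k ≠ 0 := by
      simp [ENNReal.rpow_eq_zero_iff]
    have h2kt : (2:ℝ≥0∞) ^ k ≠ ∞ := ENNReal.rpow_ne_top_of_nonneg (by linarith) (by simp)
    set a := (2:ℝ≥0∞) ^ k * M with hadef
    have ha0 : a ≠ 0 := mul_ne_zero h2k0 hM0
    have hat : a ≠ ∞ := ENNReal.mul_ne_top h2kt hM
    have ha1 : (1:ℝ≥0∞) ≤ a :=
      le_trans hM1 (le_mul_of_one_le_left zero_le (ENNReal.one_le_rpow one_le_two hk0))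
    set A := a ^ ((1:ℝ)/k) with hAdef
    set B := w ^ (-((1:ℝ)/k)) with hBdef
    have hA1 : (1:ℝ≥0∞) ≤ A := ENNReal.one_le_rpow ha1 (by positivity)
    have hAt : A ≠ ∞ := ENNReal.rpow_ne_top_of_nonneg (by positivity) hat
    have hB1 : (1:ℝ≥0∞) ≤ B :=
      ENNReal.one_le_rpow_of_pos_of_le_one_of_neg (pos_iff_ne_zero.mpr hw0) hw1
        (by rw [neg_lt_zero]; positivity)
    have hBt : B ≠ ∞ := by
      intro hc
      rw [hBdef, ENNReal.rpow_eq_top_iff] at hc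
      rcases hc with ⟨hcc, _⟩ | ⟨hcc, _⟩
      · exact hw0 hcc
      · exact hwt hcc
    have hR1 : (1:ℝ≥0∞) ≤ A * B := by
      calc (1:ℝ≥0∞) = 1 * 1 := (one_mul 1).symm
        _ ≤ A * B := mul_le_mul' hA1 hB1
    have hRt : A * B ≠ ∞ := ENNReal.mul_ne_top hAt hBt
    have e1 : (A * B) ^ (2:ℝ) * w = a ^ (2/k) * w ^ (1 - 2/k) := by
      rw [ENNReal.mul_rpow_of_ne_top hAt hBt, hAdef, hBdef,
        ← ENNReal.rpow_mul a, ← ENNReal.rpow_mul w,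
        show (1/k) * (2:ℝ) = 2/k by ring, show (-((1:ℝ)/k)) * 2 = -(2/k) by ring,
        mul_assoc]
      congr 1
      rw [show (1:ℝ) - 2/k = -(2/k) + 1 by ring, ENNReal.rpow_add _ _ hw0 hwt,
        ENNReal.rpow_one]
    have e2 : (A * B) ^ ((2:ℝ) - k) * a = a ^ (2/k) * w ^ (1 - 2/k) := by
      rw [ENNReal.mul_rpow_of_ne_top hAt hBt, hAdef, hBdef,
        ← ENNReal.rpow_mul a, ← ENNReal.rpow_mul w,
        show (1/k) * ((2:ℝ) - k) = 2/k - 1 by field_simp,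
        show (-((1:ℝ)/k)) * ((2:ℝ) - k) = 1 - 2/k by field_simp; ring,
        mul_right_comm]
      congr 1
      conv_rhs => rw [show (2:ℝ)/k = (2/k - 1) + 1 by ring]
      rw [ENNReal.rpow_add _ _ ha0 hat, ENNReal.rpow_one]
    have hak : a ^ ((2:ℝ)/k) = 2 ^ (2:ℝ) * M ^ (2/k) := by
      rw [hadef, ENNReal.mul_rpow_of_ne_top h2kt hM, ← ENNReal.rpow_mul,
        show k * ((2:ℝ)/k) = 2 by field_simp]
    have h4 : (2:ℝ≥0∞) ^ (2:ℝ) = 4 := by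
      rw [show (2:ℝ) = ((2:ℕ):ℝ) by norm_num, ENNReal.rpow_natCast]; norm_num
    have h8 : (2:ℝ≥0∞) ^ (3:ℝ) = 8 := by
      rw [show (3:ℝ) = ((3:ℕ):ℝ) by norm_num, ENNReal.rpow_natCast]; norm_num
    calc Winf (fun x y : EuclideanSpace ℝ (Fin d) => edist x y ^ 2) f g
        ≤ (A * B) ^ (2:ℝ) * w + (A * B) ^ ((2:ℝ) - k) * (2 ^ k * M) := hWle _ hR1 hRt
      _ = a ^ (2/k) * w ^ (1 - 2/k) + a ^ (2/k) * w ^ (1 - 2/k) := by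
          rw [e1, ← hadef, e2]
      _ = 2 * (a ^ (2/k) * w ^ (1 - 2/k)) := (two_mul _).symm
      _ = 2 ^ (3:ℝ) * M ^ (2/k) * w ^ (1 - 2/k) := by
          rw [hak, h4, h8]; ring

lemma couple_bound' {d : ℕ} {k : ℝ} (hk : 2 < k)
    {f g : Measure (EuclideanSpace ℝ (Fin d))}
    [IsProbabilityMeasure f] [IsProbabilityMeasure g]
    (hM : Mk k f + Mk k g ≠ ∞)
    {π : Measure (EuclideanSpace ℝ (Fin d) × EuclideanSpace ℝ (Fin d))}
    (h1 : π.map Prod.fst = f) (h2 : π.map Prod.snd = g) :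
    (Winf (fun x y : EuclideanSpace ℝ (Fin d) => edist x y ^ 2) f g) ^ ((1:ℝ)/2) ≤
      2 ^ ((3:ℝ)/2) * (Mk k f + Mk k g) ^ (1/k) *
        (∫⁻ p, dE p.1 p.2 ∂π) ^ (1/2 - 1/k) := by
  have hk0 : (0:ℝ) < k := by linarith
  haveI := isProb_of_coupling (μ := f) h1
  set M := Mk k f + Mk k g with hMdef
  set w := ∫⁻ p, dE p.1 p.2 ∂π with hwdef
  have hw1 : w ≤ 1 := by
    rw [hwdef]
    calc ∫⁻ p, dE p.1 p.2 ∂π ≤ ∫⁻ _, 1 ∂π := lintegral_mono fun p => min_le_right _ _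
      _ = 1 := by simp
  have hwt : w ≠ ∞ := ne_top_of_le_ne_top one_ne_top hw1
  have h8t : (2:ℝ≥0∞) ^ (3:ℝ) ≠ ∞ := ENNReal.rpow_ne_top_of_nonneg (by norm_num) (by simp)
  have hMkt : M ^ ((2:ℝ)/k) ≠ ∞ := ENNReal.rpow_ne_top_of_nonneg (by positivity) hM
  have hθ : (0:ℝ) ≤ 1 - 2/k := by
    have : 2/k < 1 := by rw [div_lt_one hk0]; linarith
    linarith
  have hwkt : w ^ ((1:ℝ) - 2/k) ≠ ∞ := ENNReal.rpow_ne_top_of_nonneg hθ hwt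
  have h := ENNReal.rpow_le_rpow (couple_bound hk hM h1 h2) (by norm_num : (0:ℝ) ≤ 1/2)
  refine le_trans h (le_of_eq ?_)
  rw [ENNReal.mul_rpow_of_ne_top (ENNReal.mul_ne_top h8t hMkt) hwkt,
    ENNReal.mul_rpow_of_ne_top h8t hMkt,
    ← ENNReal.rpow_mul, ← ENNReal.rpow_mul, ← ENNReal.rpow_mul,
    show (3:ℝ) * (1/2) = 3/2 by norm_num,
    show ((2:ℝ)/k) * (1/2) = 1/k by ring,
    show ((1:ℝ) - 2/k) * (1/2) = 1/2 - 1/k by ring]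

/-! ### Passing to the infimum -/

lemma rpow_iInf {ι : Sort*} (w : ι → ℝ≥0∞) {θ : ℝ} (hθ : 0 < θ) :
    (⨅ i, w i) ^ θ = ⨅ i, w i ^ θ := by
  have h := OrderIso.map_iInf (ENNReal.orderIsoRpow θ hθ) w
  simp only [ENNReal.orderIsoRpow_apply] at h
  exact h

lemma le_mul_iInf_rpow {ι : Sort*} (w : ι → ℝ≥0∞) {c : ℝ≥0∞} (hc0 : c ≠ 0) (hct : c ≠ ∞)
    {θ : ℝ} (hθ : 0 < θ) {x : ℝ≥0∞} (h : ∀ i, x ≤ c * w i ^ θ) :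
    x ≤ c * (⨅ i, w i) ^ θ := by
  rw [rpow_iInf w hθ, ENNReal.mul_iInf_of_ne hc0 hct]
  exact le_iInf h

/-! ### `W₁ = 0` implies equality of the measures -/

lemma lintegral_tIAux_le {α : Type*} [MeasurableSpace α] [PseudoEMetricSpace α]
    [OpensMeasurableSpace α] [SecondCountableTopology α]
    {μ ν : Measure α} [IsProbabilityMeasure μ] [IsProbabilityMeasure ν]
    (h : Winf dE μ ν = 0) (F : Set α) {δ : ℝ} (hδ : 0 < δ) :
    ∫⁻ x, thickenedIndicatorAux δ F x ∂μ ≤ ∫⁻ x, thickenedIndicatorAux δ F x ∂ν := by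
  set C : ℝ≥0∞ := max (ENNReal.ofReal δ)⁻¹ 1 with hC
  have hC0 : C ≠ 0 := by
    rw [hC]
    intro hcc
    rw [max_eq_iff] at hcc
    rcases hcc with ⟨_, hcc⟩ | ⟨hcc, _⟩ <;> simp_all
  have hCt : C ≠ ∞ := by
    rw [hC]
    intro hcc
    rw [max_eq_iff] at hcc
    rcases hcc with ⟨hcc, _⟩ | ⟨hcc, _⟩
    · rw [ENNReal.inv_eq_top] at hcc
      exact absurd hcc (ENNReal.ofReal_pos.mpr hδ).ne'
    · exact one_ne_top hcc
  have hmeasAux : Measurable (thickenedIndicatorAux δ F) :=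
    (continuous_thickenedIndicatorAux hδ F).measurable
  have hbddν : ∫⁻ x, thickenedIndicatorAux δ F x ∂ν ≤ 1 := by
    calc ∫⁻ x, thickenedIndicatorAux δ F x ∂ν ≤ ∫⁻ _, 1 ∂ν :=
          lintegral_mono fun x => thickenedIndicatorAux_le_one δ F x
      _ = 1 := by simp
  have hpt : ∀ x y : α,
      thickenedIndicatorAux δ F x ≤ thickenedIndicatorAux δ F y + C * dE x y := by
    intro x y
    rcases le_or_gt (edist x y) 1 with h1 | h1
    · have hdE : dE x y = edist x y := min_eq_left h1
      have hinf : EMetric.infEdist y F / ENNReal.ofReal δ ≤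
          EMetric.infEdist x F / ENNReal.ofReal δ + C * dE x y := by
        have hstep : EMetric.infEdist y F ≤ EMetric.infEdist x F + edist x y := by
          rw [edist_comm]
          exact EMetric.infEdist_le_infEdist_add_edist
        calc EMetric.infEdist y F / ENNReal.ofReal δ
            ≤ (EMetric.infEdist x F + edist x y) / ENNReal.ofReal δ :=
              ENNReal.div_le_div_right hstep _
          _ = EMetric.infEdist x F / ENNReal.ofReal δ + edist x y / ENNReal.ofReal δ :=
              ENNReal.add_div
          _ ≤ EMetric.infEdist x F / ENNReal.ofReal δ + C * dE x y := by
              refine add_le_add le_rfl ?_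
              rw [hdE, div_eq_mul_inv, mul_comm]
              exact mul_le_mul_left (le_max_left _ _) _
      show (1:ℝ≥0∞) - EMetric.infEdist x F / ENNReal.ofReal δ ≤
        ((1:ℝ≥0∞) - EMetric.infEdist y F / ENNReal.ofReal δ) + C * dE x y
      rw [tsub_le_iff_right]
      calc (1:ℝ≥0∞)
          ≤ ((1:ℝ≥0∞) - EMetric.infEdist y F / ENNReal.ofReal δ) +
            EMetric.infEdist y F / ENNReal.ofReal δ := le_tsub_add
        _ ≤ ((1:ℝ≥0∞) - EMetric.infEdist y F / ENNReal.ofReal δ) +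
            (EMetric.infEdist x F / ENNReal.ofReal δ + C * dE x y) :=
              add_le_add le_rfl hinf
        _ = (((1:ℝ≥0∞) - EMetric.infEdist y F / ENNReal.ofReal δ) + C * dE x y) +
            EMetric.infEdist x F / ENNReal.ofReal δ := by ring
    · have hdE : dE x y = 1 := min_eq_right h1.le
      calc thickenedIndicatorAux δ F x ≤ 1 := thickenedIndicatorAux_le_one δ F x
        _ ≤ C * dE x y := by rw [hdE, mul_one]; exact le_max_right _ _
        _ ≤ thickenedIndicatorAux δ F y + C * dE x y := le_add_self
  apply ENNReal.le_of_forall_pos_le_add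
  intro ε hε _
  have hεz : ((ε:ℝ≥0∞)) ≠ 0 := by exact_mod_cast hε.ne'
  have hεC : (0:ℝ≥0∞) < (ε : ℝ≥0∞) / C := ENNReal.div_pos hεz hCt
  have hcex : Winf dE μ ν < (ε : ℝ≥0∞) / C := by rw [h]; exact hεC
  obtain ⟨π, h1, h2, hcost⟩ := exists_coupling_lt hcex
  have hm1 : Measurable fun p : α × α => thickenedIndicatorAux δ F p.1 :=
    hmeasAux.comp measurable_fst
  have hm2 : Measurable fun p : α × α => thickenedIndicatorAux δ F p.2 :=
    hmeasAux.comp measurable_snd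
  calc ∫⁻ x, thickenedIndicatorAux δ F x ∂μ
      = ∫⁻ p, thickenedIndicatorAux δ F p.1 ∂π := by
        rw [← h1, lintegral_map hmeasAux measurable_fst]
    _ ≤ ∫⁻ p, (thickenedIndicatorAux δ F p.2 + C * dE p.1 p.2) ∂π :=
        lintegral_mono fun p => hpt p.1 p.2
    _ = ∫⁻ p, thickenedIndicatorAux δ F p.2 ∂π + C * ∫⁻ p, dE p.1 p.2 ∂π := by
        rw [lintegral_add_left hm2, lintegral_const_mul' _ _ hCt]
    _ ≤ ∫⁻ x, thickenedIndicatorAux δ F x ∂ν + ε := by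
        rw [← h2, lintegral_map hmeasAux measurable_snd]
        refine add_le_add le_rfl ?_
        calc C * ∫⁻ p, dE p.1 p.2 ∂π ≤ C * ((ε : ℝ≥0∞) / C) :=
              mul_le_mul_right hcost.le _
          _ = ε := ENNReal.mul_div_cancel hC0 hCt

lemma eq_of_winf_dE_zero {α : Type*} [MeasurableSpace α] [PseudoEMetricSpace α]
    [BorelSpace α] [SecondCountableTopology α]
    {μ ν : Measure α} [IsProbabilityMeasure μ] [IsProbabilityMeasure ν]
    (h : Winf dE μ ν = 0) : μ = ν := by
  have hsymm : Winf dE ν μ = 0 :=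
    le_antisymm (le_trans (winf_dE_symm_le μ ν) h.le) zero_le
  have key : ∀ F : Set α, IsClosed F → μ F = ν F := by
    intro F hF
    have δpos : ∀ n : ℕ, 0 < (1:ℝ)/(n+1) := fun n => Nat.one_div_pos_of_nat
    have δlim := tendsto_one_div_add_atTop_nhds_zero_nat (𝕜 := ℝ)
    have hμ := tendsto_lintegral_thickenedIndicator_of_isClosed μ hF δpos δlim
    have hν := tendsto_lintegral_thickenedIndicator_of_isClosed ν hF δpos δlim
    have hcoe : ∀ (n : ℕ) (x : α),
        ((thickenedIndicator (δpos n) F x : ℝ≥0∞) : ℝ≥0∞) =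
          thickenedIndicatorAux ((1:ℝ)/(n+1)) F x := by
      intro n x
      rw [thickenedIndicator_apply, ENNReal.coe_toNNReal thickenedIndicatorAux_lt_top.ne]
    have heq : (fun n => lintegral μ fun ω => ((thickenedIndicator (δpos n) F ω : ℝ≥0∞) : ℝ≥0∞))
        = fun n => lintegral ν fun ω => ((thickenedIndicator (δpos n) F ω : ℝ≥0∞) : ℝ≥0∞) := by
      funext n
      have hμint : (lintegral μ fun ω => ((thickenedIndicator (δpos n) F ω : ℝ≥0∞) : ℝ≥0∞))
          = ∫⁻ x, thickenedIndicatorAux ((1:ℝ)/(n+1)) F x ∂μ :=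
        lintegral_congr fun x => hcoe n x
      have hνint : (lintegral ν fun ω => ((thickenedIndicator (δpos n) F ω : ℝ≥0∞) : ℝ≥0∞))
          = ∫⁻ x, thickenedIndicatorAux ((1:ℝ)/(n+1)) F x ∂ν :=
        lintegral_congr fun x => hcoe n x
      rw [hμint, hνint]
      exact le_antisymm (lintegral_tIAux_le h F (δpos n)) (lintegral_tIAux_le hsymm F (δpos n))
    rw [heq] at hμ
    exact tendsto_nhds_unique hμ hν
  refine ext_of_generate_finite {s : Set α | IsClosed s} ?_ isPiSystem_isClosed
    (fun s hs => key s hs) (key _ isClosed_univ)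
  rw [BorelSpace.measurable_eq (α := α), borel_eq_generateFrom_isClosed]

end W2aux

open W2aux in
/-- For probability measures `f, g` on `ℝ^d` and `k > 2`:
`W₂(f,g) ≤ 2^{3/2} (M_k(f)+M_k(g))^{1/k} W₁(f,g)^{1/2-1/k}`. -/
theorem stmt0 (d : ℕ) (k : ℝ) (hk : 2 < k)
    (f g : Measure (EuclideanSpace ℝ (Fin d)))
    [IsProbabilityMeasure f] [IsProbabilityMeasure g] :
    (Winf (fun x y => edist x y ^ 2) f g) ^ ((1 : ℝ) / 2) ≤
      (2 : ℝ≥0∞) ^ ((3 : ℝ) / 2) * (Mk k f + Mk k g) ^ (1 / k) *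
        (Winf dE f g) ^ (1 / 2 - 1 / k) := by
  have hk0 : (0:ℝ) < k := by linarith
  have hθpos : (0:ℝ) < 1/2 - 1/k := by
    have h12 : 1/k < 1/2 := by
      rw [div_lt_div_iff₀ hk0 (by norm_num)]
      linarith
    linarith
  have hW1top : Winf dE f g ≠ ∞ := ne_top_of_le_ne_top one_ne_top (winf_dE_le_one f g)
  by_cases hM : Mk k f + Mk k g = ∞
  · by_cases hW1 : Winf dE f g = 0
    · have hfg : f = g := eq_of_winf_dE_zero hW1
      have hW2 : Winf (fun x y : EuclideanSpace ℝ (Fin d) => edist x y ^ 2) f g = 0 := by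
        rw [hfg]
        exact winf_self_zero g
      rw [hW2, ENNReal.zero_rpow_of_pos (by norm_num)]
      exact zero_le
    · have hRHS : (2 : ℝ≥0∞) ^ ((3 : ℝ) / 2) * (Mk k f + Mk k g) ^ (1 / k) *
          (Winf dE f g) ^ (1 / 2 - 1 / k) = ∞ := by
        rw [hM, ENNReal.top_rpow_of_pos (by positivity)]
        rw [ENNReal.mul_top (by simp [ENNReal.rpow_eq_zero_iff])]
        rw [ENNReal.top_mul]
        exact (ENNReal.rpow_pos (pos_iff_ne_zero.mpr hW1) hW1top).ne'
      rw [hRHS]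
      exact le_top
  · -- moments finite
    have hM1 : (1:ℝ≥0∞) ≤ Mk k f + Mk k g := le_trans (one_le_Mk (by linarith) f) le_self_add
    have hc0 : (2:ℝ≥0∞) ^ ((3:ℝ)/2) * (Mk k f + Mk k g) ^ ((1:ℝ)/k) ≠ 0 := by
      apply mul_ne_zero
      · simp [ENNReal.rpow_eq_zero_iff]
      · intro hc
        rw [ENNReal.rpow_eq_zero_iff] at hc
        rcases hc with ⟨hcc, _⟩ | ⟨hcc, _⟩
        · rw [hcc] at hM1; simp at hM1
        · exact hM hcc
    have hct : (2:ℝ≥0∞) ^ ((3:ℝ)/2) * (Mk k f + Mk k g) ^ ((1:ℝ)/k) ≠ ∞ :=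
      ENNReal.mul_ne_top (ENNReal.rpow_ne_top_of_nonneg (by norm_num) (by simp))
        (ENNReal.rpow_ne_top_of_nonneg (by positivity) hM)
    rw [show Winf dE f g = ⨅ (π : Measure (EuclideanSpace ℝ (Fin d) × EuclideanSpace ℝ (Fin d))),
      ⨅ (_ : π.map Prod.fst = f), ⨅ (_ : π.map Prod.snd = g), ∫⁻ p, dE p.1 p.2 ∂π from rfl]
    refine le_mul_iInf_rpow _ hc0 hct hθpos fun π => ?_
    by_cases hc1 : π.map Prod.fst = f
    · by_cases hc2 : π.map Prod.snd = g
      · rw [iInf_pos hc1, iInf_pos hc2]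
        exact couple_bound' hk hM hc1 hc2
      · rw [iInf_pos hc1, iInf_neg hc2, ENNReal.top_rpow_of_pos hθpos,
          ENNReal.mul_top hc0]
        exact le_top
    · rw [iInf_neg hc1, ENNReal.top_rpow_of_pos hθpos, ENNReal.mul_top hc0]
      exact le_top
end
end

section
/- For any probability measures f, g on E ⊆ ℝ^d and any N ≥ 1, the normalized Monge-Kantorovich distance on E^N built from the cost d_{E^N}(X,Y) = N^{-1} Σᵢ min(|xᵢ-yᵢ|,1) satisfies W₁(f^{⊗N}, g^{⊗N}) = W₁(f,g). -/
open MeasureTheory ENNReal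

noncomputable section

lemma map_eval_pi' {ι : Type*} [Fintype ι] {α : Type*} [MeasurableSpace α]
    (μ : ι → Measure α) [∀ i, IsProbabilityMeasure (μ i)] (i : ι) :
    (Measure.pi μ).map (Function.eval i) = μ i := by
  classical
  ext s hs
  rw [Measure.map_apply (measurable_pi_apply i) hs]
  have hpre : Function.eval i ⁻¹' s =
      Set.pi Set.univ (Function.update (fun _ : ι => (Set.univ : Set α)) i s) := by
    ext x
    constructor
    · intro h j _
      by_cases hj : j = i
      · subst hj; simpa using h
      · simp [Function.update_of_ne hj]
    · intro h
      have := h i (Set.mem_univ _)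
      simpa using this
  rw [hpre, Measure.pi_pi]
  rw [Finset.prod_eq_single i (fun j _ hj => by simp [Function.update_of_ne hj]) (by simp)]
  simp

lemma measurable_dE_pair {α : Type*} [PseudoEMetricSpace α] [MeasurableSpace α]
    [OpensMeasurableSpace α] [SecondCountableTopology α] :
    Measurable (fun p : α × α => dE p.1 p.2) := by
  simp only [dE]
  exact (measurable_fst.edist measurable_snd).min measurable_const

/-- For any `N ≥ 1` and probability measures `f, g` on `E ⊆ ℝ^d`, the normalized
MKW distance on `E^N` with cost `(1/N) Σᵢ min(|xᵢ-yᵢ|,1)` satisfies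
`W₁(f^{⊗N}, g^{⊗N}) = W₁(f,g)`. -/
theorem stmt1 (d N : ℕ) (hN : 1 ≤ N)
    (f g : Measure (EuclideanSpace ℝ (Fin d)))
    [IsProbabilityMeasure f] [IsProbabilityMeasure g] :
    Winf (fun X Y : Fin N → EuclideanSpace ℝ (Fin d) => (∑ i, dE (X i) (Y i)) / N)
        (Measure.pi fun _ => f) (Measure.pi fun _ => g) = Winf dE f g := by
  set E := EuclideanSpace ℝ (Fin d)
  have hN0 : (N : ℝ≥0∞) ≠ 0 := Nat.cast_ne_zero.mpr (by omega)
  have hNtop : (N : ℝ≥0∞) ≠ ⊤ := natCast_ne_top N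
  apply le_antisymm
  · -- (≤) : from a coupling π of f, g, build the product coupling
    refine le_iInf fun π => le_iInf fun h1 => le_iInf fun h2 => ?_
    haveI : IsProbabilityMeasure π := by
      constructor
      have : (π.map Prod.fst) Set.univ = 1 := by rw [h1]; simp
      rwa [Measure.map_apply measurable_fst MeasurableSet.univ, Set.preimage_univ] at this
    set e := MeasurableEquiv.arrowProdEquivProdArrow E E (Fin N) with he
    set P := (Measure.pi fun _ : Fin N => π).map e with hP
    have hfst : P.map Prod.fst = Measure.pi fun _ => f := by
      rw [hP, Measure.map_map measurable_fst e.measurable]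
      have hcomp : (Prod.fst ∘ e : (Fin N → E × E) → (Fin N → E)) =
          fun ω i => (ω i).1 := rfl
      rw [hcomp]
      exact (measurePreserving_pi (fun _ : Fin N => π) (fun _ => f)
        (fun _ => ⟨measurable_fst, h1⟩)).map_eq
    have hsnd : P.map Prod.snd = Measure.pi fun _ => g := by
      rw [hP, Measure.map_map measurable_snd e.measurable]
      have hcomp : (Prod.snd ∘ e : (Fin N → E × E) → (Fin N → E)) =
          fun ω i => (ω i).2 := rfl
      rw [hcomp]
      exact (measurePreserving_pi (fun _ : Fin N => π) (fun _ => g)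
        (fun _ => ⟨measurable_snd, h2⟩)).map_eq
    refine iInf_le_of_le P (iInf_le_of_le hfst (iInf_le_of_le hsnd ?_))
    rw [hP, lintegral_map_equiv _ e]
    have hce : ∀ ω : Fin N → E × E,
        (∑ i, dE ((e ω).1 i) ((e ω).2 i)) / N = (∑ i, dE (ω i).1 (ω i).2) / N :=
      fun ω => rfl
    simp only [hce]
    have hmeas : ∀ i : Fin N,
        Measurable (fun ω : Fin N → E × E => dE (ω i).1 (ω i).2) :=
      fun i => measurable_dE_pair.comp (measurable_pi_apply i)
    calc ∫⁻ ω, (∑ i, dE (ω i).1 (ω i).2) / N ∂(Measure.pi fun _ : Fin N => π)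
        = (∫⁻ ω, ∑ i, dE (ω i).1 (ω i).2 ∂(Measure.pi fun _ : Fin N => π)) / N := by
          simp only [div_eq_mul_inv]
          exact lintegral_mul_const' _ _ (by simp [hN0])
      _ = (∑ i : Fin N, ∫⁻ ω, dE (ω i).1 (ω i).2 ∂(Measure.pi fun _ : Fin N => π)) / N := by
          rw [lintegral_finset_sum' _ (fun i _ => (hmeas i).aemeasurable)]
      _ = (∑ _i : Fin N, ∫⁻ p, dE p.1 p.2 ∂π) / N := by
          congr 1
          refine Finset.sum_congr rfl fun i _ => ?_
          have := map_eval_pi' (fun _ : Fin N => π) i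
          conv_rhs => rw [← this]
          rw [lintegral_map measurable_dE_pair (measurable_pi_apply i)]
      _ = ∫⁻ p, dE p.1 p.2 ∂π := by
          rw [Finset.sum_const, Finset.card_univ, Fintype.card_fin, nsmul_eq_mul,
            mul_comm, mul_div_assoc, ENNReal.div_self hN0 hNtop, mul_one]
      _ ≤ ∫⁻ p, dE p.1 p.2 ∂π := le_rfl
  · -- (≥) : from a coupling P of the product measures, project to each coordinate
    refine le_iInf fun P => le_iInf fun h1 => le_iInf fun h2 => ?_
    have key : ∀ i : Fin N, Winf dE f g ≤ ∫⁻ p, dE (p.1 i) (p.2 i) ∂P := by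
      intro i
      set πi := P.map (fun p : (Fin N → E) × (Fin N → E) => (p.1 i, p.2 i)) with hπi
      have hm : Measurable (fun p : (Fin N → E) × (Fin N → E) => (p.1 i, p.2 i)) :=
        ((measurable_pi_apply i).comp measurable_fst).prodMk
          ((measurable_pi_apply i).comp measurable_snd)
      have hfst : πi.map Prod.fst = f := by
        rw [hπi, Measure.map_map measurable_fst hm]
        have : (Prod.fst ∘ fun p : (Fin N → E) × (Fin N → E) => (p.1 i, p.2 i)) =
            Function.eval i ∘ Prod.fst := rfl
        rw [this, ← Measure.map_map (measurable_pi_apply i) measurable_fst, h1,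
          map_eval_pi']
      have hsnd : πi.map Prod.snd = g := by
        rw [hπi, Measure.map_map measurable_snd hm]
        have : (Prod.snd ∘ fun p : (Fin N → E) × (Fin N → E) => (p.1 i, p.2 i)) =
            Function.eval i ∘ Prod.snd := rfl
        rw [this, ← Measure.map_map (measurable_pi_apply i) measurable_snd, h2,
          map_eval_pi']
      refine le_trans (iInf_le_of_le πi (iInf_le_of_le hfst (iInf_le_of_le hsnd le_rfl))) ?_
      rw [hπi, lintegral_map measurable_dE_pair hm]
    have hmeas : ∀ i : Fin N,
        Measurable (fun p : (Fin N → E) × (Fin N → E) => dE (p.1 i) (p.2 i)) :=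
      fun i => measurable_dE_pair.comp
        (((measurable_pi_apply i).comp measurable_fst).prodMk
          ((measurable_pi_apply i).comp measurable_snd))
    have hsum : (N : ℝ≥0∞) * Winf dE f g ≤
        ∫⁻ p, ∑ i, dE (p.1 i) (p.2 i) ∂P := by
      rw [lintegral_finset_sum' _ (fun i _ => (hmeas i).aemeasurable)]
      calc (N : ℝ≥0∞) * Winf dE f g = ∑ _i : Fin N, Winf dE f g := by
            rw [Finset.sum_const, Finset.card_univ, Fintype.card_fin, nsmul_eq_mul]
        _ ≤ ∑ i : Fin N, ∫⁻ p, dE (p.1 i) (p.2 i) ∂P :=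
            Finset.sum_le_sum fun i _ => key i
    have hint : ∫⁻ p, (∑ i, dE (p.1 i) (p.2 i)) / N ∂P =
        (∫⁻ p, ∑ i, dE (p.1 i) (p.2 i) ∂P) / N := by
      simp only [div_eq_mul_inv]
      exact lintegral_mul_const' _ _ (by simp [hN0])
    rw [hint]
    rw [ENNReal.le_div_iff_mul_le (Or.inl hN0) (Or.inl hNtop), mul_comm]
    exact hsum
end
end

section
/- Let F^N, G^N be symmetric probability measures on E^N (invariant under coordinate permutations) and 1 ≤ j ≤ N. Then the normalized Kantorovich distances satisfy W₁(F^N_j, G^N_j) ≤ ( (j/N)·⌊N/j⌋ )^{-1} · W₁(F^N, G^N) ≤ 2·W₁(F^N, G^N), where F^N_j denotes the j-th marginal. -/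
open MeasureTheory ENNReal

noncomputable section

/-- Normalized cost on `E^n`: `(1/n) Σᵢ d_E(xᵢ,yᵢ)`. -/
def costN (d n : ℕ) (X Y : Fin n → EuclideanSpace ℝ (Fin d)) : ℝ≥0∞ :=
  (∑ i, dE (X i) (Y i)) / n

/-- Marginal on the first `j` coordinates. -/
def marg (d N j : ℕ) (h : j ≤ N) (F : Measure (Fin N → EuclideanSpace ℝ (Fin d))) :
    Measure (Fin j → EuclideanSpace ℝ (Fin d)) :=
  F.map (fun X => fun i : Fin j => X (Fin.castLE h i))

lemma measurable_costN (d n : ℕ) :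
    Measurable (fun p : (Fin n → EuclideanSpace ℝ (Fin d)) × (Fin n → EuclideanSpace ℝ (Fin d)) =>
      costN d n p.1 p.2) := by
  unfold costN dE
  apply Measurable.div _ measurable_const
  apply Finset.measurable_sum
  intro i _
  exact (((measurable_pi_apply i).comp measurable_fst).edist
    ((measurable_pi_apply i).comp measurable_snd)).min measurable_const

lemma measurable_costN_comp (d n m : ℕ) (g : Fin m → Fin n) :
    Measurable (fun p : (Fin n → EuclideanSpace ℝ (Fin d)) × (Fin n → EuclideanSpace ℝ (Fin d)) =>
      costN d m (fun i => p.1 (g i)) (fun i => p.2 (g i))) := by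
  unfold costN dE
  apply Measurable.div _ measurable_const
  apply Finset.measurable_sum
  intro i _
  exact (((measurable_pi_apply (g i)).comp measurable_fst).edist
    ((measurable_pi_apply (g i)).comp measurable_snd)).min measurable_const

lemma measurable_restr {d n m : ℕ} (g : Fin m → Fin n) :
    Measurable (fun X : Fin n → EuclideanSpace ℝ (Fin d) => fun i : Fin m => X (g i)) :=
  measurable_pi_lambda _ fun i => measurable_pi_apply (g i)

/-- If `F` is symmetric, the projection onto the block of `j` coordinates given by
a map of the form `i ↦ i + c` has the same law as the first-`j` marginal. -/
lemma sym_marg (d N j : ℕ) (hjN : j ≤ N) (hN : 1 ≤ N)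
    (F : Measure (Fin N → EuclideanSpace ℝ (Fin d)))
    (hFsym : ∀ σ : Equiv.Perm (Fin N), F.map (fun X => X ∘ σ) = F)
    (g : Fin j → Fin N) (c : Fin N) (hg : ∀ i, g i = Fin.castLE hjN i + c) :
    F.map (fun X => fun i : Fin j => X (g i)) = marg d N j hjN F := by
  haveI : NeZero N := ⟨by omega⟩
  set σ : Equiv.Perm (Fin N) := Equiv.addRight c with hσ
  have h2 : Measurable (fun X : Fin N → EuclideanSpace ℝ (Fin d) => X ∘ ⇑σ) :=
    measurable_restr (fun i => σ i)
  have hcomp : (fun X : Fin N → EuclideanSpace ℝ (Fin d) => fun i : Fin j => X (g i)) =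
      (fun Y : Fin N → EuclideanSpace ℝ (Fin d) => fun i : Fin j => Y (Fin.castLE hjN i)) ∘
        (fun X => X ∘ ⇑σ) := by
    funext X
    funext i
    simp [hσ, hg i, Function.comp]
  rw [hcomp, ← Measure.map_map (measurable_restr _) h2, hFsym σ, marg]

/-- Injective reindexing bound for sums in `ℝ≥0∞`. -/
lemma sum_reindex_le {α β : Type*} [Fintype α] [Fintype β] [DecidableEq β]
    (ι : α → β) (hinj : Function.Injective ι) (f : β → ℝ≥0∞) :
    ∑ a : α, f (ι a) ≤ ∑ b : β, f b := by
  rw [← Finset.sum_image (f := f) (g := ι) (fun a _ b _ h => hinj h)]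
  exact Finset.sum_le_sum_of_subset (Finset.subset_univ _)

/-- Reduce an upper bound on a transport infimum to a bound for each coupling. -/
lemma le_mul_winf {α : Type*} [MeasurableSpace α] (c : α → α → ℝ≥0∞) (μ ν : Measure α)
    (x C : ℝ≥0∞) (hC0 : C ≠ 0) (hCt : C ≠ ∞)
    (h : ∀ π : Measure (α × α), π.map Prod.fst = μ → π.map Prod.snd = ν →
      x ≤ C * ∫⁻ p, c p.1 p.2 ∂π) :
    x ≤ C * Winf c μ ν := by
  rw [Winf, ENNReal.mul_iInf_of_ne hC0 hCt]
  refine le_iInf fun π => ?_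
  rw [ENNReal.mul_iInf_of_ne hC0 hCt]
  refine le_iInf fun h1 => ?_
  rw [ENNReal.mul_iInf_of_ne hC0 hCt]
  exact le_iInf fun h2 => h π h1 h2

set_option maxHeartbeats 1000000 in
/-- For symmetric probability measures `F^N, G^N` on `E^N` and `1 ≤ j ≤ N`:
`W₁(F^N_j, G^N_j) ≤ ((j/N)·⌊N/j⌋)⁻¹ · W₁(F^N, G^N) ≤ 2·W₁(F^N, G^N)`. -/
theorem stmt3 (d N j : ℕ) (hj : 1 ≤ j) (hjN : j ≤ N)
    (F G : Measure (Fin N → EuclideanSpace ℝ (Fin d)))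
    [IsProbabilityMeasure F] [IsProbabilityMeasure G]
    (hFsym : ∀ σ : Equiv.Perm (Fin N), F.map (fun X => X ∘ σ) = F)
    (hGsym : ∀ σ : Equiv.Perm (Fin N), G.map (fun X => X ∘ σ) = G) :
    Winf (costN d j) (marg d N j hjN F) (marg d N j hjN G) ≤
        ((j : ℝ≥0∞) / (N : ℝ≥0∞) * ((N / j : ℕ) : ℝ≥0∞))⁻¹ * Winf (costN d N) F G ∧
      ((j : ℝ≥0∞) / (N : ℝ≥0∞) * ((N / j : ℕ) : ℝ≥0∞))⁻¹ * Winf (costN d N) F G ≤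
        2 * Winf (costN d N) F G := by
  have hN : 1 ≤ N := le_trans hj hjN
  haveI : NeZero N := ⟨by omega⟩
  set M : ℕ := N / j with hMdef
  have hM1 : 1 ≤ M := (Nat.one_le_div_iff (by omega)).mpr hjN
  have hMjN : M * j ≤ N := Nat.div_mul_le_self N j
  -- basic casts
  have hj0 : (j : ℝ≥0∞) ≠ 0 := Nat.cast_ne_zero.mpr (by omega)
  have hjt : (j : ℝ≥0∞) ≠ ∞ := natCast_ne_top j
  have hN0 : (N : ℝ≥0∞) ≠ 0 := Nat.cast_ne_zero.mpr (by omega)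
  have hNt : (N : ℝ≥0∞) ≠ ∞ := natCast_ne_top N
  have hM0 : (M : ℝ≥0∞) ≠ 0 := Nat.cast_ne_zero.mpr (by omega)
  have hMt : (M : ℝ≥0∞) ≠ ∞ := natCast_ne_top M
  -- the constant
  have hCval : ((j : ℝ≥0∞) / (N : ℝ≥0∞) * (M : ℝ≥0∞))⁻¹
      = (N : ℝ≥0∞) * (j : ℝ≥0∞)⁻¹ * (M : ℝ≥0∞)⁻¹ := by
    rw [ENNReal.mul_inv (Or.inl (by simp [ENNReal.div_eq_zero_iff, hj0, hNt]))
      (Or.inr hM0), ENNReal.inv_div (Or.inr hjt) (Or.inr hj0)]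
    rw [div_eq_mul_inv]
  have hC0 : ((j : ℝ≥0∞) / (N : ℝ≥0∞) * (M : ℝ≥0∞))⁻¹ ≠ 0 := by
    rw [hCval]
    simp [hN0, ENNReal.inv_ne_zero, hjt, hMt]
  have hCt : ((j : ℝ≥0∞) / (N : ℝ≥0∞) * (M : ℝ≥0∞))⁻¹ ≠ ∞ := by
    rw [hCval]
    simp [ENNReal.mul_ne_top, hNt, ENNReal.inv_ne_top, hj0, hM0]
  constructor
  · -- main inequality: reduce to a statement about an arbitrary coupling
    refine le_mul_winf _ _ _ _ _ hC0 hCt ?_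
    intro π hπ1 hπ2
    -- the block maps
    have hidx : ∀ (k : Fin M) (i : Fin j), i.val + k.val * j < N := by
      intro k i
      have h1 : k.val * j + j ≤ M * j := by
        have hk := Nat.succ_le_of_lt k.isLt
        calc k.val * j + j = (k.val + 1) * j := by ring
        _ ≤ M * j := Nat.mul_le_mul_right j hk
      omega
    set ι : Fin M → Fin j → Fin N := fun k i => ⟨i.val + k.val * j, hidx k i⟩ with hι
    have hgc : ∀ k : Fin M, ∀ i : Fin j,
        ι k i = Fin.castLE hjN i + (⟨k.val * j, by have := hidx k ⟨0, by omega⟩; omega⟩ : Fin N) := by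
      intro k i
      ext
      simp [Fin.add_def, hι]
      rw [Nat.mod_eq_of_lt (hidx k i)]
    have hTm : ∀ k : Fin M, Measurable
        (fun p : (Fin N → EuclideanSpace ℝ (Fin d)) × (Fin N → EuclideanSpace ℝ (Fin d)) =>
          ((fun i => p.1 (ι k i), fun i => p.2 (ι k i)) :
            (Fin j → EuclideanSpace ℝ (Fin d)) × (Fin j → EuclideanSpace ℝ (Fin d)))) := fun k =>
      ((measurable_restr (ι k)).comp measurable_fst).prodMk
        ((measurable_restr (ι k)).comp measurable_snd)
    -- Step A: each block projection of π is a coupling of the marginals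
    have stepA : ∀ k : Fin M,
        Winf (costN d j) (marg d N j hjN F) (marg d N j hjN G) ≤
          ∫⁻ p, costN d j (fun i => p.1 (ι k i)) (fun i => p.2 (ι k i)) ∂π := by
      intro k
      set πk := π.map (fun p : (Fin N → EuclideanSpace ℝ (Fin d)) × (Fin N → EuclideanSpace ℝ (Fin d)) =>
          ((fun i => p.1 (ι k i), fun i => p.2 (ι k i)) :
            (Fin j → EuclideanSpace ℝ (Fin d)) × (Fin j → EuclideanSpace ℝ (Fin d)))) with hπk
      have hfst : πk.map Prod.fst = marg d N j hjN F := by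
        rw [hπk, Measure.map_map measurable_fst (hTm k)]
        have heq : (Prod.fst ∘ (fun p : (Fin N → EuclideanSpace ℝ (Fin d)) × (Fin N → EuclideanSpace ℝ (Fin d)) =>
            ((fun i => p.1 (ι k i), fun i => p.2 (ι k i)) :
              (Fin j → EuclideanSpace ℝ (Fin d)) × (Fin j → EuclideanSpace ℝ (Fin d)))))
            = (fun X : Fin N → EuclideanSpace ℝ (Fin d) => fun i : Fin j => X (ι k i)) ∘ Prod.fst := rfl
        rw [heq, ← Measure.map_map (measurable_restr (ι k)) measurable_fst, hπ1]
        exact sym_marg d N j hjN hN F hFsym (ι k) _ (hgc k)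
      have hsnd : πk.map Prod.snd = marg d N j hjN G := by
        rw [hπk, Measure.map_map measurable_snd (hTm k)]
        have heq : (Prod.snd ∘ (fun p : (Fin N → EuclideanSpace ℝ (Fin d)) × (Fin N → EuclideanSpace ℝ (Fin d)) =>
            ((fun i => p.1 (ι k i), fun i => p.2 (ι k i)) :
              (Fin j → EuclideanSpace ℝ (Fin d)) × (Fin j → EuclideanSpace ℝ (Fin d)))))
            = (fun X : Fin N → EuclideanSpace ℝ (Fin d) => fun i : Fin j => X (ι k i)) ∘ Prod.snd := rfl
        rw [heq, ← Measure.map_map (measurable_restr (ι k)) measurable_snd, hπ2]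
        exact sym_marg d N j hjN hN G hGsym (ι k) _ (hgc k)
      have hle : Winf (costN d j) (marg d N j hjN F) (marg d N j hjN G) ≤
          ∫⁻ p, costN d j p.1 p.2 ∂πk := by
        refine iInf_le_of_le πk ?_
        exact iInf_le_of_le hfst (iInf_le _ hsnd)
      refine le_trans hle (le_of_eq ?_)
      rw [hπk, lintegral_map (measurable_costN d j) (hTm k)]
    -- Step B: sum over the blocks
    set W := Winf (costN d j) (marg d N j hjN F) (marg d N j hjN G) with hW
    set I := ∫⁻ p, costN d N p.1 p.2 ∂π with hI
    have hinj : Function.Injective (fun q : Fin M × Fin j => ι q.1 q.2) := by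
      intro ⟨k, i⟩ ⟨k', i'⟩ h
      simp only [hι, Fin.mk.injEq] at h
      have hk : k.val = k'.val := by
        have h1 : (i.val + k.val * j) / j = k.val := by
          rw [Nat.add_mul_div_right _ _ (by omega : 0 < j), Nat.div_eq_of_lt i.isLt, zero_add]
        have h2 : (i'.val + k'.val * j) / j = k'.val := by
          rw [Nat.add_mul_div_right _ _ (by omega : 0 < j), Nat.div_eq_of_lt i'.isLt, zero_add]
        rw [← h1, ← h2, h]
      have hkj : k.val * j = k'.val * j := by rw [hk]
      have hi : i.val = i'.val := by omega
      exact Prod.ext (Fin.ext hk) (Fin.ext hi)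
    have h3 : ∀ p : (Fin N → EuclideanSpace ℝ (Fin d)) × (Fin N → EuclideanSpace ℝ (Fin d)),
        ∑ k : Fin M, costN d j (fun i => p.1 (ι k i)) (fun i => p.2 (ι k i)) ≤
          costN d N p.1 p.2 * (N : ℝ≥0∞) * (j : ℝ≥0∞)⁻¹ := by
      intro p
      have hS : costN d N p.1 p.2 * (N : ℝ≥0∞) = ∑ m : Fin N, dE (p.1 m) (p.2 m) := by
        rw [costN, ENNReal.div_mul_cancel hN0 hNt]
      rw [hS]
      unfold costN
      simp only [div_eq_mul_inv]
      rw [← Finset.sum_mul]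
      apply mul_le_mul_left
      have hre : ∑ k : Fin M, ∑ i : Fin j, dE (p.1 (ι k i)) (p.2 (ι k i)) =
          ∑ q : Fin M × Fin j, dE (p.1 (ι q.1 q.2)) (p.2 (ι q.1 q.2)) :=
        (Fintype.sum_prod_type (f := fun q : Fin M × Fin j =>
          dE (p.1 (ι q.1 q.2)) (p.2 (ι q.1 q.2)))).symm
      rw [hre]
      exact sum_reindex_le (fun q : Fin M × Fin j => ι q.1 q.2) hinj
        (fun m => dE (p.1 m) (p.2 m))
    have hsum : (M : ℝ≥0∞) * W ≤ I * (N : ℝ≥0∞) * (j : ℝ≥0∞)⁻¹ := by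
      have h1 : (M : ℝ≥0∞) * W ≤
          ∑ k : Fin M, ∫⁻ p, costN d j (fun i => p.1 (ι k i)) (fun i => p.2 (ι k i)) ∂π := by
        have hcard := Finset.card_nsmul_le_sum Finset.univ
          (fun k : Fin M => ∫⁻ p, costN d j (fun i => p.1 (ι k i)) (fun i => p.2 (ι k i)) ∂π) W
          (fun k _ => stepA k)
        simpa [nsmul_eq_mul] using hcard
      have h2 : ∑ k : Fin M, ∫⁻ p, costN d j (fun i => p.1 (ι k i)) (fun i => p.2 (ι k i)) ∂π =
          ∫⁻ p, ∑ k : Fin M, costN d j (fun i => p.1 (ι k i)) (fun i => p.2 (ι k i)) ∂π := by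
        rw [lintegral_finset_sum]
        intro k _
        exact measurable_costN_comp d N j (ι k)
      calc (M : ℝ≥0∞) * W
          ≤ ∫⁻ p, ∑ k : Fin M, costN d j (fun i => p.1 (ι k i)) (fun i => p.2 (ι k i)) ∂π := by
            rw [← h2]; exact h1
        _ ≤ ∫⁻ p, costN d N p.1 p.2 * (N : ℝ≥0∞) * (j : ℝ≥0∞)⁻¹ ∂π :=
            lintegral_mono h3
        _ = I * (N : ℝ≥0∞) * (j : ℝ≥0∞)⁻¹ := by
            rw [lintegral_mul_const _ ((measurable_costN d N).mul_const _),
              lintegral_mul_const _ (measurable_costN d N)]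
    -- conclude
    rw [hCval]
    have hWeq : W = (M : ℝ≥0∞)⁻¹ * ((M : ℝ≥0∞) * W) := by
      rw [← mul_assoc, ENNReal.inv_mul_cancel hM0 hMt, one_mul]
    rw [hWeq]
    calc (M : ℝ≥0∞)⁻¹ * ((M : ℝ≥0∞) * W) ≤ (M : ℝ≥0∞)⁻¹ * (I * (N : ℝ≥0∞) * (j : ℝ≥0∞)⁻¹) :=
          mul_le_mul_right hsum _
      _ = (N : ℝ≥0∞) * (j : ℝ≥0∞)⁻¹ * (M : ℝ≥0∞)⁻¹ * I := by ring
  · -- the constant is at most 2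
    apply mul_le_mul_left
    have hnat : N ≤ 2 * (j * M) := by
      have h1 : j * M + N % j = N := Nat.div_add_mod N j
      have h2 : N % j < j := Nat.mod_lt _ (by omega)
      have h3 : j ≤ j * M := Nat.le_mul_of_pos_right j (by omega)
      omega
    rw [hCval]
    have hrw : (N : ℝ≥0∞) * (j : ℝ≥0∞)⁻¹ * (M : ℝ≥0∞)⁻¹
        = (N : ℝ≥0∞) / ((j : ℝ≥0∞) * (M : ℝ≥0∞)) := by
      rw [div_eq_mul_inv, ENNReal.mul_inv (Or.inl hj0) (Or.inl hjt), mul_assoc]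
    rw [hrw]
    rw [ENNReal.div_le_iff_le_mul (Or.inl (mul_ne_zero hj0 hM0))
      (Or.inl (ENNReal.mul_ne_top hjt hMt))]
    calc (N : ℝ≥0∞) ≤ ((2 * (j * M) : ℕ) : ℝ≥0∞) := by exact_mod_cast hnat
      _ = 2 * ((j : ℝ≥0∞) * (M : ℝ≥0∞)) := by push_cast; ring
end
end

section
/- The first marginal σ^N_1 of the uniform measure on the Kac sphere {|V|² = N} in ℝ^N has uniformly bounded Gaussian exponential moment: ∫_ℝ e^{v²/4} σ^N_1(dv) ≤ 6 for all N ≥ 5. -/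
open MeasureTheory ENNReal

noncomputable section

/-- Standard Gaussian product measure on `ℝ^N`. -/
def stdGaussianPi (N : ℕ) : Measure (Fin N → ℝ) :=
  Measure.pi fun _ => ProbabilityTheory.gaussianReal 0 1

/-- Euclidean norm on `Fin N → ℝ`. -/
def enorm2 {N : ℕ} (V : Fin N → ℝ) : ℝ := Real.sqrt (∑ i, (V i) ^ 2)

/-- The uniform probability measure `σ^N` on the Kac sphere `{|V|² = N}`, realized as
the push-forward of the rotation-invariant standard Gaussian by the radial projection
`V ↦ √N·V/|V|`. -/
def kacSphere (N : ℕ) : Measure (Fin N → ℝ) :=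
  (stdGaussianPi N).map (fun V => (Real.sqrt N / enorm2 V) • V)

open ProbabilityTheory Real in
lemma integrable_exp_sq_gaussian {b : ℝ} (hb : b < 1/2) :
    Integrable (fun x => Real.exp (b * x^2)) (gaussianReal 0 1) := by
  rw [gaussianReal_of_var_ne_zero 0 one_ne_zero]
  rw [integrable_withDensity_iff (measurable_gaussianPDF 0 1)
    (ae_of_all _ fun x => ENNReal.ofReal_lt_top)]
  have : (fun x => Real.exp (b * x^2) * (gaussianPDF 0 1 x).toReal)
      = fun x => (Real.sqrt (2*π))⁻¹ * Real.exp (-(1/2 - b) * x^2) := by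
    funext x
    rw [gaussianPDF, ENNReal.toReal_ofReal (gaussianPDFReal_nonneg 0 1 x), gaussianPDFReal]
    simp only [NNReal.coe_one, mul_one, sub_zero]
    rw [mul_comm, mul_assoc, ← Real.exp_add]
    ring_nf
  rw [this]
  exact (integrable_exp_neg_mul_sq (by linarith)).const_mul _

open ProbabilityTheory Real in
lemma integral_exp_sq_gaussian {b : ℝ} (hb : b < 1/2) :
    ∫ x, Real.exp (b * x^2) ∂(gaussianReal 0 1) = Real.sqrt (1/(1-2*b)) := by
  rw [gaussianReal_of_var_ne_zero 0 one_ne_zero]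
  have hpdf : gaussianPDF 0 1
      = fun x => ((Real.toNNReal (gaussianPDFReal 0 1 x) : NNReal) : ℝ≥0∞) := rfl
  rw [hpdf, integral_withDensity_eq_integral_smul
    ((measurable_gaussianPDFReal 0 1).real_toNNReal)]
  have : (fun x => (Real.toNNReal (gaussianPDFReal 0 1 x)) • Real.exp (b * x^2))
      = fun x => (Real.sqrt (2*π))⁻¹ * Real.exp (-(1/2 - b) * x^2) := by
    funext x
    rw [NNReal.smul_def, smul_eq_mul, Real.coe_toNNReal _ (gaussianPDFReal_nonneg 0 1 x),
      gaussianPDFReal]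
    simp only [NNReal.coe_one, mul_one, sub_zero]
    rw [mul_assoc, ← Real.exp_add]
    ring_nf
  rw [this, integral_const_mul, integral_gaussian]
  rw [← Real.sqrt_inv, ← Real.sqrt_mul (by positivity)]
  congr 1
  have hne : (1:ℝ) - 2*b ≠ 0 := by intro h; rw [sub_eq_zero] at h; linarith
  have hne2 : (1:ℝ)/2 - b ≠ 0 := by intro h; rw [sub_eq_zero] at h; linarith [hb]
  have hπ' : π ≠ 0 := ne_of_gt pi_pos
  field_simp
  try ring
  try simp
  try tauto

open ProbabilityTheory in
lemma lintegral_pi_prod_ofReal {N : ℕ} (f : Fin N → ℝ → ℝ)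
    (hInt : ∀ i, Integrable (f i) (gaussianReal 0 1))
    (hpos : ∀ i x, 0 ≤ f i x) :
    ∫⁻ V : Fin N → ℝ, ENNReal.ofReal (∏ i, f i (V i)) ∂(stdGaussianPi N)
      = ENNReal.ofReal (∏ i, ∫ x, f i x ∂(gaussianReal 0 1)) := by
  letI : MeasureSpace ℝ := ⟨gaussianReal 0 1⟩
  haveI : SigmaFinite (volume : Measure ℝ) :=
    (inferInstance : SigmaFinite (gaussianReal 0 1))
  have hvol : stdGaussianPi N = (volume : Measure (Fin N → ℝ)) := by
    rw [volume_pi]; rfl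
  rw [hvol]
  simp only [show (gaussianReal 0 1) = (volume : Measure ℝ) from rfl]
  rw [← MeasureTheory.integral_fintype_prod_eq_prod (f := f)]
  exact (ofReal_integral_eq_lintegral_ofReal (Integrable.fintype_prod hInt)
    (ae_of_all _ fun V => Finset.prod_nonneg fun i _ => hpos i (V i))).symm

lemma exponent_ineq (n v y : ℝ) (hn : 0 ≤ n) (hy : 0 ≤ y) :
    ((Real.sqrt n / Real.sqrt (v^2 + y)) * v)^2 / 4
      ≤ max (169/400 * v^2) (n/4 + v^2/4 - 2/5 * y) := by
  have hvy : 0 ≤ v^2 + y := by positivity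
  rcases eq_or_lt_of_le hvy with h0 | hpos
  · have hv : v = 0 := by nlinarith [sq_nonneg v]
    subst hv
    simp only [ne_eq, OfNat.ofNat_ne_zero, not_false_eq_true, zero_pow, mul_zero, zero_div]
    exact le_max_of_le_left (by norm_num)
  · have hA : ((Real.sqrt n / Real.sqrt (v^2 + y)) * v)^2 / 4 = n * v^2 / (4 * (v^2 + y)) := by
      rw [mul_pow, div_pow, Real.sq_sqrt hn, Real.sq_sqrt hvy]
      field_simp
      try ring
      try simp
    rw [hA]
    rcases le_total (169 * y) (100 * n) with hc | hc
    · refine le_max_of_le_right ?_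
      rw [div_le_iff₀ (by positivity)]
      nlinarith [sq_nonneg (v^2 - 3/10 * y),
        mul_nonneg hy (by linarith : (0:ℝ) ≤ 100 * n - 169 * y)]
    · refine le_max_of_le_left ?_
      rw [div_le_iff₀ (by positivity)]
      nlinarith [mul_nonneg (sq_nonneg v) (by linarith : (0:ℝ) ≤ 169 * y - 100 * n),
        sq_nonneg (v*v)]

lemma exp_quarter_le : Real.exp (1/4 : ℝ) ≤ 4/3 := by
  have h := Real.add_one_le_exp (-(1/4 : ℝ))
  rw [Real.exp_neg] at h
  have hp := Real.exp_pos (1/4 : ℝ)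
  have h2 : (3/4 : ℝ) * Real.exp (1/4) ≤ (Real.exp (1/4))⁻¹ * Real.exp (1/4) :=
    mul_le_mul_of_nonneg_right (by linarith) hp.le
  rw [inv_mul_cancel₀ (ne_of_gt hp)] at h2
  linarith

lemma q_le_one : Real.exp (1/4 : ℝ) * Real.sqrt (5/9) ≤ 1 := by
  have h4 : (Real.exp (1/4 : ℝ) * Real.sqrt (5/9))^4 = Real.exp 1 * (5/9)^2 := by
    rw [mul_pow, ← Real.exp_nat_mul]
    have : (Real.sqrt (5/9))^4 = ((Real.sqrt (5/9))^2)^2 := by ring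
    rw [this, Real.sq_sqrt (by norm_num : (0:ℝ) ≤ 5/9)]
    norm_num
  have he : Real.exp 1 < 2.7182818286 := Real.exp_one_lt_d9
  have hq0 : 0 ≤ Real.exp (1/4 : ℝ) * Real.sqrt (5/9) :=
    mul_nonneg (Real.exp_pos _).le (Real.sqrt_nonneg _)
  have h1 : (Real.exp (1/4 : ℝ) * Real.sqrt (5/9))^4 ≤ 1 := by nlinarith
  exact (pow_le_one_iff_of_nonneg hq0 (by norm_num)).mp h1

lemma numeric_bound (N : ℕ) (hN : 5 ≤ N) :
    Real.sqrt (200/31) + Real.exp ((N:ℝ)/4) * Real.sqrt 2 * (Real.sqrt (5/9))^(N-1) ≤ 6 := by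
  obtain ⟨n, rfl⟩ : ∃ n, N = n + 1 := ⟨N-1, by omega⟩
  have hn4 : 4 ≤ n := by omega
  simp only [Nat.add_sub_cancel]
  have h1 : Real.sqrt (200/31) ≤ 2.55 := by
    rw [show (2.55:ℝ) = Real.sqrt (2.55^2) by rw [Real.sqrt_sq]; norm_num]
    exact Real.sqrt_le_sqrt (by norm_num)
  have h2 : Real.sqrt 2 ≤ 1.415 := by
    rw [show (1.415:ℝ) = Real.sqrt (1.415^2) by rw [Real.sqrt_sq]; norm_num]
    exact Real.sqrt_le_sqrt (by norm_num)
  set q : ℝ := Real.exp (1/4) * Real.sqrt (5/9) with hqdef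
  have hq0 : 0 ≤ q := mul_nonneg (Real.exp_pos _).le (Real.sqrt_nonneg _)
  have hE : Real.exp ((↑(n+1):ℝ)/4) * (Real.sqrt (5/9))^n = Real.exp (1/4) * q^n := by
    have hc : (↑(n+1):ℝ)/4 = 1/4 + n * (1/4) := by push_cast; ring
    rw [hc, Real.exp_add, Real.exp_nat_mul, hqdef, mul_pow]
    ring
  have hqpow : q^n ≤ q^4 := pow_le_pow_of_le_one hq0 q_le_one hn4
  have hq4 : q^4 = Real.exp 1 * (5/9)^2 := by
    rw [hqdef, mul_pow, ← Real.exp_nat_mul]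
    have : (Real.sqrt (5/9))^4 = ((Real.sqrt (5/9))^2)^2 := by ring
    rw [this, Real.sq_sqrt (by norm_num : (0:ℝ) ≤ 5/9)]
    norm_num
  have he : Real.exp 1 < 2.7182818286 := Real.exp_one_lt_d9
  have hexp14 := exp_quarter_le
  have hE2 : Real.exp ((↑(n+1):ℝ)/4) * (Real.sqrt (5/9))^n
      ≤ (4/3) * (2.7182818286 * (5/9)^2) := by
    rw [hE]
    have hq' : q^n ≤ Real.exp 1 * (5/9)^2 := by rw [← hq4]; exact hqpow
    have h5 : (0:ℝ) ≤ Real.exp 1 * (5/9)^2 := by positivity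
    nlinarith [pow_nonneg hq0 n, Real.exp_pos (1/4:ℝ)]
  have hEnn : (0:ℝ) ≤ Real.exp ((↑(n+1):ℝ)/4) * (Real.sqrt (5/9))^n := by positivity
  calc Real.sqrt (200/31) + Real.exp ((↑(n+1):ℝ)/4) * Real.sqrt 2 * (Real.sqrt (5/9))^n
      = Real.sqrt (200/31)
        + Real.sqrt 2 * (Real.exp ((↑(n+1):ℝ)/4) * (Real.sqrt (5/9))^n) := by ring
    _ ≤ 2.55 + 1.415 * ((4/3) * (2.7182818286 * (5/9)^2)) := by
        have := mul_le_mul h2 hE2 hEnn (by norm_num)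
        linarith
    _ ≤ 6 := by norm_num

/-- The first marginal `σ^N_1` of the uniform measure on the Kac sphere has uniformly
bounded Gaussian exponential moment: `∫ e^{v²/4} σ^N_1(dv) ≤ 6` for all `N ≥ 5`. -/
theorem stmt17 (N : ℕ) (hN : 5 ≤ N) :
    (∫⁻ v, ENNReal.ofReal (Real.exp (v ^ 2 / 4))
        ∂((kacSphere N).map (fun V => V ⟨0, by omega⟩))) ≤ 6 := by
  classical
  set i0 : Fin N := ⟨0, by omega⟩ with hi0
  set γ := ProbabilityTheory.gaussianReal 0 1 with hγ
  -- measurability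
  have henorm : Measurable fun V : Fin N → ℝ => enorm2 V := by
    apply Continuous.measurable
    exact Real.continuous_sqrt.comp
      (continuous_finset_sum _ fun i _ => (continuous_apply i).pow 2)
  have hT : Measurable fun V : Fin N → ℝ => (Real.sqrt N / enorm2 V) • V := by
    rw [measurable_pi_iff]
    intro i
    simp only [Pi.smul_apply, smul_eq_mul]
    exact (measurable_const.div henorm).mul (measurable_pi_apply i)
  have hproj : Measurable fun V : Fin N → ℝ => V i0 := measurable_pi_apply i0
  have hg : Measurable fun V : Fin N → ℝ => Real.sqrt N / enorm2 V * V i0 :=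
    (measurable_const.div henorm).mul (measurable_pi_apply i0)
  have hfm : Measurable fun v : ℝ => ENNReal.ofReal (Real.exp (v ^ 2 / 4)) :=
    (Real.measurable_exp.comp ((measurable_id.pow_const 2).div_const 4)).ennreal_ofReal
  -- rewrite the integral over the Gaussian
  rw [kacSphere, Measure.map_map hproj hT]
  have hcomp : ((fun V : Fin N → ℝ => V i0) ∘ fun V : Fin N → ℝ =>
      (Real.sqrt N / enorm2 V) • V) = fun V : Fin N → ℝ => Real.sqrt N / enorm2 V * V i0 := by
    funext V
    simp [Function.comp, Pi.smul_apply, smul_eq_mul]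
  rw [hcomp, lintegral_map hfm hg]
  -- comparison functions
  set f1 : Fin N → ℝ → ℝ := fun i x => if i = i0 then Real.exp (169/400 * x^2) else 1 with hf1
  set f2 : Fin N → ℝ → ℝ := fun i x =>
    if i = i0 then Real.exp ((N:ℝ)/4 + 1/4 * x^2) else Real.exp (-(2/5) * x^2) with hf2
  have hsplitP : ∀ F : Fin N → ℝ, (∏ i, F i) = F i0 * ∏ i ∈ Finset.univ.erase i0, F i :=
    fun F => (Finset.mul_prod_erase Finset.univ F (Finset.mem_univ i0)).symm
  -- pointwise bound
  have hpt : ∀ V : Fin N → ℝ,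
      ENNReal.ofReal (Real.exp ((Real.sqrt N / enorm2 V * V i0) ^ 2 / 4))
        ≤ ENNReal.ofReal (∏ i, f1 i (V i)) + ENNReal.ofReal (∏ i, f2 i (V i)) := by
    intro V
    set v := V i0 with hv
    set y := ∑ j ∈ Finset.univ.erase i0, (V j)^2 with hydef
    have hy : 0 ≤ y := Finset.sum_nonneg fun j _ => sq_nonneg _
    have ht : ∑ i, (V i)^2 = v^2 + y :=
      (Finset.add_sum_erase Finset.univ (fun i => (V i)^2) (Finset.mem_univ i0)).symm
    have henV : enorm2 V = Real.sqrt (v^2 + y) := by rw [enorm2, ht]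
    have hP1 : ∏ i, f1 i (V i) = Real.exp (169/400 * v^2) := by
      rw [hsplitP fun i => f1 i (V i)]
      have : ∏ i ∈ Finset.univ.erase i0, f1 i (V i) = 1 :=
        Finset.prod_eq_one fun j hj => by
          simp [hf1, Finset.ne_of_mem_erase hj]
      rw [this, mul_one, hf1]
      simp [hv]
    have hP2 : ∏ i, f2 i (V i) = Real.exp ((N:ℝ)/4 + v^2/4 - 2/5 * y) := by
      rw [hsplitP fun i => f2 i (V i)]
      have h1 : f2 i0 (V i0) = Real.exp ((N:ℝ)/4 + 1/4 * v^2) := by simp [hf2, hv]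
      have h2 : ∏ j ∈ Finset.univ.erase i0, f2 j (V j)
          = Real.exp (∑ j ∈ Finset.univ.erase i0, -(2/5) * (V j)^2) := by
        rw [Real.exp_sum]
        exact Finset.prod_congr rfl fun j hj => by
          simp [hf2, Finset.ne_of_mem_erase hj]
      rw [h1, h2, ← Real.exp_add, ← Finset.mul_sum, ← hydef]
      congr 1
      ring
    have hkey := exponent_ineq (N:ℝ) v y (Nat.cast_nonneg N) hy
    have h3 : Real.exp ((Real.sqrt N / enorm2 V * V i0) ^ 2 / 4)
        ≤ Real.exp (169/400 * v^2) + Real.exp ((N:ℝ)/4 + v^2/4 - 2/5 * y) := by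
      rw [henV, ← hv]
      rcases le_max_iff.mp hkey with h | h
      · exact le_add_of_le_of_nonneg (Real.exp_le_exp.mpr h) (Real.exp_pos _).le
      · refine le_add_of_nonneg_of_le (Real.exp_pos _).le (Real.exp_le_exp.mpr ?_)
        calc ((Real.sqrt N / Real.sqrt (v^2+y)) * v)^2/4 ≤ (N:ℝ)/4 + v^2/4 - 2/5*y := h
          _ = (N:ℝ)/4 + v^2/4 - 2/5*y := rfl
    calc ENNReal.ofReal (Real.exp ((Real.sqrt N / enorm2 V * V i0) ^ 2 / 4))
        ≤ ENNReal.ofReal (Real.exp (169/400 * v^2)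
            + Real.exp ((N:ℝ)/4 + v^2/4 - 2/5 * y)) := ENNReal.ofReal_le_ofReal h3
      _ = ENNReal.ofReal (Real.exp (169/400 * v^2))
            + ENNReal.ofReal (Real.exp ((N:ℝ)/4 + v^2/4 - 2/5 * y)) :=
          ENNReal.ofReal_add (Real.exp_pos _).le (Real.exp_pos _).le
      _ = ENNReal.ofReal (∏ i, f1 i (V i)) + ENNReal.ofReal (∏ i, f2 i (V i)) := by
          rw [hP1, hP2]
  -- measurability of the comparison functions
  have hm1 : Measurable fun V : Fin N → ℝ => ENNReal.ofReal (∏ i, f1 i (V i)) := by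
    refine Measurable.ennreal_ofReal (Finset.measurable_prod _ fun i _ => ?_)
    by_cases h : i = i0 <;> simp only [hf1, h, if_pos, if_neg, ite_true, ite_false]
    · exact Real.measurable_exp.comp ((measurable_pi_apply i0).pow_const 2 |>.const_mul _)
    · exact measurable_const
  -- integrability
  have hInt1 : ∀ i, Integrable (f1 i) γ := by
    intro i
    by_cases h : i = i0 <;> simp only [hf1, h, ite_true, ite_false]
    · exact integrable_exp_sq_gaussian (by norm_num)
    · exact integrable_const 1
  have hInt2 : ∀ i, Integrable (f2 i) γ := by
    intro i
    by_cases h : i = i0 <;> simp only [hf2, h, ite_true, ite_false]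
    · have hfun : (fun x : ℝ => Real.exp ((N:ℝ)/4 + 1/4 * x^2))
          = fun x => Real.exp ((N:ℝ)/4) * Real.exp (1/4 * x^2) := by
        funext x; rw [← Real.exp_add]
      rw [hfun]
      exact (integrable_exp_sq_gaussian (by norm_num)).const_mul _
    · exact integrable_exp_sq_gaussian (by norm_num)
  have hpos1 : ∀ (i : Fin N) (x : ℝ), 0 ≤ f1 i x := by
    intro i x
    by_cases h : i = i0 <;> simp [hf1, h, (Real.exp_pos _).le]
  have hpos2 : ∀ (i : Fin N) (x : ℝ), 0 ≤ f2 i x := by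
    intro i x
    by_cases h : i = i0 <;> simp [hf2, h, (Real.exp_pos _).le]
  -- values of the 1D integrals
  have hI1 : ∏ i, ∫ x, f1 i x ∂γ = Real.sqrt (200/31) := by
    rw [hsplitP fun i => ∫ x, f1 i x ∂γ]
    have h1 : ∫ x, f1 i0 x ∂γ = Real.sqrt (200/31) := by
      simp only [hf1, ite_true, if_pos rfl]
      rw [hγ, integral_exp_sq_gaussian (by norm_num)]
      norm_num
    have h2 : ∏ i ∈ Finset.univ.erase i0, ∫ x, f1 i x ∂γ = 1 := by
      refine Finset.prod_eq_one fun j hj => ?_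
      have : f1 j = fun _ => (1:ℝ) := by
        funext x; simp [hf1, Finset.ne_of_mem_erase hj]
      rw [this]
      simp [hγ]
    rw [h1, h2, mul_one]
  have hI2 : ∏ i, ∫ x, f2 i x ∂γ
      = Real.exp ((N:ℝ)/4) * Real.sqrt 2 * (Real.sqrt (5/9))^(N-1) := by
    rw [hsplitP fun i => ∫ x, f2 i x ∂γ]
    have h1 : ∫ x, f2 i0 x ∂γ = Real.exp ((N:ℝ)/4) * Real.sqrt 2 := by
      simp only [hf2, ite_true, if_pos rfl]
      have hfun : (fun x : ℝ => Real.exp ((N:ℝ)/4 + 1/4 * x^2))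
          = fun x => Real.exp ((N:ℝ)/4) * Real.exp (1/4 * x^2) := by
        funext x; rw [← Real.exp_add]
      rw [hfun, integral_const_mul, hγ, integral_exp_sq_gaussian (by norm_num)]
      norm_num
    have h2 : ∏ i ∈ Finset.univ.erase i0, ∫ x, f2 i x ∂γ = (Real.sqrt (5/9))^(N-1) := by
      have hval : ∀ j ∈ Finset.univ.erase i0, (∫ x, f2 j x ∂γ) = Real.sqrt (5/9) := by
        intro j hj
        have : f2 j = fun x => Real.exp (-(2/5) * x^2) := by
          funext x; simp [hf2, Finset.ne_of_mem_erase hj]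
        rw [this, hγ, integral_exp_sq_gaussian (by norm_num)]
        norm_num
      rw [Finset.prod_congr rfl hval, Finset.prod_const, Finset.card_erase_of_mem
        (Finset.mem_univ i0), Finset.card_univ, Fintype.card_fin]
    rw [h1, h2]
  -- put everything together
  calc ∫⁻ V, ENNReal.ofReal (Real.exp ((Real.sqrt N / enorm2 V * V i0) ^ 2 / 4))
        ∂(stdGaussianPi N)
      ≤ ∫⁻ V, (ENNReal.ofReal (∏ i, f1 i (V i))
          + ENNReal.ofReal (∏ i, f2 i (V i))) ∂(stdGaussianPi N) := lintegral_mono hpt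
    _ = (∫⁻ V, ENNReal.ofReal (∏ i, f1 i (V i)) ∂(stdGaussianPi N))
          + ∫⁻ V, ENNReal.ofReal (∏ i, f2 i (V i)) ∂(stdGaussianPi N) :=
        lintegral_add_left hm1 _
    _ = ENNReal.ofReal (Real.sqrt (200/31))
          + ENNReal.ofReal (Real.exp ((N:ℝ)/4) * Real.sqrt 2 * (Real.sqrt (5/9))^(N-1)) := by
        rw [lintegral_pi_prod_ofReal f1 hInt1 hpos1, lintegral_pi_prod_ofReal f2 hInt2 hpos2,
          hI1, hI2]
    _ ≤ 6 := by
        rw [← ENNReal.ofReal_add (Real.sqrt_nonneg _) (by positivity)]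
        calc ENNReal.ofReal (Real.sqrt (200/31)
              + Real.exp ((N:ℝ)/4) * Real.sqrt 2 * (Real.sqrt (5/9))^(N-1))
            ≤ ENNReal.ofReal 6 := ENNReal.ofReal_le_ofReal (numeric_bound N hN)
          _ = 6 := by norm_num
end
end
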